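/- arXiv:2505.02562 — 5 statements merged into one kernel-verified Lean document; each statement's English description precedes it below -/
import Mathlib

section
/- Let F and F₁ be positive definite symmetric matrices and D a positive definite symmetric matrix with D² ≤ κ²F (in the Loewner order) for some κ > 0. If ‖D⁻¹(F₁ - F)D⁻¹‖ ≤ κ⁻²δ with δ < 1, then ‖F^{-1/2}(F₁ - F)F^{-1/2}‖ ≤ δ. -/
open scoped Matrix.Norms.L2Operator RealInnerProductSpace
open Matrix

namespace Matrix.PosSemidef

open scoped ComplexOrder

noncomputable def sqrt {n 𝕜 : Type*} [Fintype n] [RCLike 𝕜] [DecidableEq n]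
    {A : Matrix n n 𝕜} (hA : A.PosSemidef) : Matrix n n 𝕜 :=
  hA.1.eigenvectorUnitary.1 * diagonal ((↑) ∘ (√·) ∘ hA.1.eigenvalues) *
  (star hA.1.eigenvectorUnitary : Matrix n n 𝕜)

end Matrix.PosSemidef


noncomputable def vnorm {p : ℕ} (v : Fin p → ℝ) : ℝ :=
  ‖(WithLp.equiv 2 (Fin p → ℝ)).symm v‖

private lemma psd_sqrt_posSemidef {n : Type*} [Fintype n] [DecidableEq n]
    {A : Matrix n n ℝ} (hA : A.PosSemidef) : hA.sqrt.PosSemidef := by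
  unfold Matrix.PosSemidef.sqrt
  have h := (Matrix.PosSemidef.diagonal (R := ℝ) (n := n)
    (d := ((√·) ∘ hA.1.eigenvalues)) (fun i => by simp [Real.sqrt_nonneg])).mul_mul_conjTranspose_same
    (hA.1.eigenvectorUnitary.1)
  exact h

private lemma psd_sqrt_mul_self {n : Type*} [Fintype n] [DecidableEq n]
    {A : Matrix n n ℝ} (hA : A.PosSemidef) : hA.sqrt * hA.sqrt = A := by
  unfold Matrix.PosSemidef.sqrt
  rw [show ∀ X Y Z : Matrix n n ℝ, X * Y * Z * (X * Y * Z) = X * (Y * (Z * X) * Y) * Z from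
    fun X Y Z => by simp only [Matrix.mul_assoc]]
  have hCC : (star hA.1.eigenvectorUnitary : Matrix n n ℝ) * hA.1.eigenvectorUnitary.1 = 1 := by simp
  rw [hCC, Matrix.mul_one, diagonal_mul_diagonal]
  conv_rhs => rw [hA.1.spectral_theorem]
  rw [Unitary.conjStarAlgAut_apply]
  congr 3
  funext i
  simp [Real.mul_self_sqrt (hA.eigenvalues_nonneg i)]

private lemma dot_eq_normsq {p : ℕ} (w : Fin p → ℝ) :
    w ⬝ᵥ w = ‖(WithLp.equiv 2 (Fin p → ℝ)).symm w‖ ^ 2 := by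
  rw [← real_inner_self_eq_norm_sq]
  rw [show (WithLp.equiv 2 (Fin p → ℝ)).symm w = WithLp.toLp 2 w from rfl, EuclideanSpace.inner_toLp_toLp]
  simp [dotProduct]

private lemma symdot {p : ℕ} {M : Matrix (Fin p) (Fin p) ℝ} (hM : Mᵀ = M)
    (v w : Fin p → ℝ) : v ⬝ᵥ (M *ᵥ w) = w ⬝ᵥ (M *ᵥ v) := by
  rw [dotProduct_mulVec, ← mulVec_transpose, hM, dotProduct_comm]

/-- spectral norm of a symmetric matrix is bounded by a quadratic-form bound -/
private lemma herm_norm_le {p : ℕ} (M : Matrix (Fin p) (Fin p) ℝ) (hM : Mᵀ = M) {c : ℝ}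
    (hc : 0 ≤ c) (hq : ∀ x : Fin p → ℝ, |x ⬝ᵥ (M *ᵥ x)| ≤ c * (x ⬝ᵥ x)) : ‖M‖ ≤ c := by
  have key : ∀ v w : Fin p → ℝ, 4 * ((M *ᵥ v) ⬝ᵥ w) ≤ 2 * c * (v ⬝ᵥ v + w ⬝ᵥ w) := by
    intro v w
    have h1 := hq (v + w)
    have h2 := hq (v - w)
    simp only [mulVec_add, mulVec_sub, dotProduct_add, dotProduct_sub, add_dotProduct,
      sub_dotProduct] at h1 h2
    have s1 : w ⬝ᵥ (M *ᵥ v) = v ⬝ᵥ (M *ᵥ w) := symdot hM w v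
    have s2 : (M *ᵥ v) ⬝ᵥ w = v ⬝ᵥ (M *ᵥ w) := by rw [dotProduct_comm]; exact s1
    have s3 : w ⬝ᵥ v = v ⬝ᵥ w := dotProduct_comm w v
    rw [abs_le] at h1 h2
    linarith [h1.1, h1.2, h2.1, h2.2]
  rw [Matrix.l2_opNorm_def]
  refine ContinuousLinearMap.opNorm_le_bound _ hc fun x => ?_
  have happ : ((Matrix.toEuclideanLin.trans LinearMap.toContinuousLinearMap) M) x
      = (WithLp.equiv 2 (Fin p → ℝ)).symm (M *ᵥ (WithLp.equiv 2 (Fin p → ℝ)) x) := by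
    rw [LinearEquiv.trans_apply]
    exact Matrix.toEuclideanLin_apply M x
  rw [happ]
  set v : Fin p → ℝ := (WithLp.equiv 2 (Fin p → ℝ)) x with hv
  set u : Fin p → ℝ := M *ᵥ v with hu
  by_cases h0 : u = 0
  · rw [h0]
    have hz0 : (WithLp.equiv 2 (Fin p → ℝ)).symm (0 : Fin p → ℝ) = 0 := rfl
    rw [hz0, norm_zero]
    positivity
  · set a : ℝ := ‖x‖ with ha
    set b : ℝ := ‖(WithLp.equiv 2 (Fin p → ℝ)).symm u‖ with hb
    have hxv : x = (WithLp.equiv 2 (Fin p → ℝ)).symm v := rfl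
    have hα : v ⬝ᵥ v = a ^ 2 := by rw [dot_eq_normsq, ha, hxv]
    have hβ : u ⬝ᵥ u = b ^ 2 := dot_eq_normsq u
    have hbpos : 0 < b := by
      rw [hb, norm_pos_iff]
      simpa using h0
    have hapos : 0 < a := by
      rw [ha, norm_pos_iff]
      intro hx0
      apply h0
      rw [hu, hv, hx0]
      simp
    have hkey := key (b • v) (a • u)
    simp only [Matrix.mulVec_smul, smul_dotProduct, dotProduct_smul, smul_eq_mul] at hkey
    rw [← hu] at hkey
    rw [hα, hβ] at hkey
    -- hkey : 4 * (b * (a * (u ⬝ᵥ u))) ≤ 2 * c * (b * (b * a^2) + a * (a * b^2))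
    have hβ' : u ⬝ᵥ u = b ^ 2 := hβ
    show b ≤ c * a
    nlinarith [hkey, mul_pos hapos (mul_pos hbpos hbpos), hapos.le, hbpos.le, sq_nonneg (b - c*a)]

private lemma abs_dot_mulVec_le {p : ℕ} (N : Matrix (Fin p) (Fin p) ℝ) (z : Fin p → ℝ) :
    |z ⬝ᵥ (N *ᵥ z)| ≤ ‖N‖ * (z ⬝ᵥ z) := by
  have h1 : z ⬝ᵥ (N *ᵥ z)
      = ⟪(WithLp.equiv 2 (Fin p → ℝ)).symm z, (WithLp.equiv 2 (Fin p → ℝ)).symm (N *ᵥ z)⟫ := by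
    rw [show ∀ w : Fin p → ℝ, (WithLp.equiv 2 (Fin p → ℝ)).symm w = WithLp.toLp 2 w from fun _ => rfl,
      EuclideanSpace.inner_toLp_toLp]
    simp [dotProduct, mul_comm]
  have h2 := abs_real_inner_le_norm ((WithLp.equiv 2 (Fin p → ℝ)).symm z)
    ((WithLp.equiv 2 (Fin p → ℝ)).symm (N *ᵥ z))
  have h3 := Matrix.l2_opNorm_mulVec N ((WithLp.equiv 2 (Fin p → ℝ)).symm z)
  have h3' : ‖(WithLp.equiv 2 (Fin p → ℝ)).symm (N *ᵥ z)‖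
      ≤ ‖N‖ * ‖(WithLp.equiv 2 (Fin p → ℝ)).symm z‖ := h3
  have h5 : z ⬝ᵥ z = ‖(WithLp.equiv 2 (Fin p → ℝ)).symm z‖ ^ 2 := dot_eq_normsq z
  have hnz : (0:ℝ) ≤ ‖(WithLp.equiv 2 (Fin p → ℝ)).symm z‖ := norm_nonneg _
  calc |z ⬝ᵥ (N *ᵥ z)| ≤ ‖(WithLp.equiv 2 (Fin p → ℝ)).symm z‖ *
        ‖(WithLp.equiv 2 (Fin p → ℝ)).symm (N *ᵥ z)‖ := by rw [h1]; exact h2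
    _ ≤ ‖(WithLp.equiv 2 (Fin p → ℝ)).symm z‖ *
        (‖N‖ * ‖(WithLp.equiv 2 (Fin p → ℝ)).symm z‖) := by
        apply mul_le_mul_of_nonneg_left _ hnz
        exact h3'
    _ = ‖N‖ * (z ⬝ᵥ z) := by rw [h5]; ring

theorem stmt_1 {p : ℕ} (F F₁ D : Matrix (Fin p) (Fin p) ℝ)
    (hF : F.PosDef) (hF₁ : F₁.PosDef) (hD : D.PosDef) (κ δ : ℝ) (hκ : 0 < κ)
    (hLoewner : (κ ^ 2 • F - D ^ 2).PosSemidef) (hδ : δ < 1)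
    (h : ‖D⁻¹ * (F₁ - F) * D⁻¹‖ ≤ κ⁻¹ ^ 2 * δ) :
    ‖(hF.posSemidef.sqrt)⁻¹ * (F₁ - F) * (hF.posSemidef.sqrt)⁻¹‖ ≤ δ := by
  set S := hF.posSemidef.sqrt with hSdef
  set A := F₁ - F with hAdef
  -- basic facts
  have hSps : S.PosSemidef := psd_sqrt_posSemidef hF.posSemidef
  have hSherm : Sᴴ = S := hSps.isHermitian
  have hSS : S * S = F := psd_sqrt_mul_self hF.posSemidef
  have hdetF : IsUnit F.det := isUnit_iff_ne_zero.mpr (ne_of_gt hF.det_pos)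
  have hdetS : IsUnit S.det := by
    have : S.det * S.det = F.det := by rw [← det_mul, hSS]
    exact isUnit_of_mul_isUnit_left (this ▸ hdetF)
  have hdetD : IsUnit D.det := isUnit_iff_ne_zero.mpr (ne_of_gt hD.det_pos)
  have hSinv : S⁻¹ * S = 1 := nonsing_inv_mul S hdetS
  have hSinv' : S * S⁻¹ = 1 := mul_nonsing_inv S hdetS
  have hDinv : D⁻¹ * D = 1 := nonsing_inv_mul D hdetD
  -- symmetry facts (real matrices: conjTranspose = transpose)
  have conj_eq_trans : ∀ M : Matrix (Fin p) (Fin p) ℝ, Mᴴ = Mᵀ := by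
    intro M; ext i j; simp [conjTranspose_apply]
  have hSsym : Sᵀ = S := by rw [← conj_eq_trans]; exact hSherm
  have hSisym : (S⁻¹)ᵀ = S⁻¹ := by rw [transpose_nonsing_inv, hSsym]
  have hDsym : Dᵀ = D := by rw [← conj_eq_trans]; exact hD.isHermitian
  have hDisym : (D⁻¹)ᵀ = D⁻¹ := by rw [transpose_nonsing_inv, hDsym]
  have hAsym : Aᵀ = A := by
    rw [hAdef, transpose_sub, ← conj_eq_trans F₁, ← conj_eq_trans F,
      hF₁.isHermitian, hF.isHermitian]
  have hMsym : (S⁻¹ * A * S⁻¹)ᵀ = S⁻¹ * A * S⁻¹ := by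
    rw [transpose_mul, transpose_mul, hSisym, hAsym, mul_assoc]
  -- δ is nonneg
  have hκ2 : (0:ℝ) < κ⁻¹ ^ 2 := by positivity
  have hδ0 : 0 ≤ δ := by
    by_contra hneg
    push_neg at hneg
    have : κ⁻¹ ^ 2 * δ < 0 := mul_neg_of_pos_of_neg hκ2 hneg
    linarith [norm_nonneg (D⁻¹ * A * D⁻¹), h]
  -- quadratic form bound
  apply herm_norm_le _ hMsym hδ0
  intro x
  set y : Fin p → ℝ := S⁻¹ *ᵥ x with hy
  have e1 : x ⬝ᵥ ((S⁻¹ * A * S⁻¹) *ᵥ x) = y ⬝ᵥ (A *ᵥ y) := by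
    rw [← mulVec_mulVec, ← mulVec_mulVec, ← hy, symdot hSisym x (A *ᵥ y), ← hy, dotProduct_comm]
  set z : Fin p → ℝ := D *ᵥ y with hz
  have hyz : y = D⁻¹ *ᵥ z := by
    rw [hz, mulVec_mulVec, hDinv, one_mulVec]
  have e2 : z ⬝ᵥ ((D⁻¹ * A * D⁻¹) *ᵥ z) = y ⬝ᵥ (A *ᵥ y) := by
    rw [← mulVec_mulVec, ← mulVec_mulVec, ← hyz, symdot hDisym z (A *ᵥ y), ← hyz, dotProduct_comm]
  have e3 : z ⬝ᵥ z = y ⬝ᵥ ((D ^ 2) *ᵥ y) := by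
    rw [hz, pow_two, ← mulVec_mulVec, symdot hDsym y (D *ᵥ y)]
  have e4 : y ⬝ᵥ (F *ᵥ y) = x ⬝ᵥ x := by
    have hx : S *ᵥ y = x := by rw [hy, mulVec_mulVec, hSinv', one_mulVec]
    rw [← hSS, ← mulVec_mulVec, symdot hSsym y (S *ᵥ y), hx]
  -- Loewner inequality
  have hL := hLoewner.dotProduct_mulVec_nonneg y
  have hLs : y ⬝ᵥ ((D ^ 2) *ᵥ y) ≤ κ ^ 2 * (y ⬝ᵥ (F *ᵥ y)) := by
    have : (0:ℝ) ≤ y ⬝ᵥ ((κ ^ 2 • F - D ^ 2) *ᵥ y) := by simpa using hL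
    rw [sub_mulVec, dotProduct_sub, smul_mulVec, dotProduct_smul, smul_eq_mul] at this
    linarith
  -- norm bound on D⁻¹AD⁻¹
  have hN := abs_dot_mulVec_le (D⁻¹ * A * D⁻¹) z
  have hzz : (0:ℝ) ≤ z ⬝ᵥ z := by
    have := dot_eq_normsq z; rw [this]; positivity
  have step1 : |x ⬝ᵥ ((S⁻¹ * A * S⁻¹) *ᵥ x)| ≤ κ⁻¹ ^ 2 * δ * (z ⬝ᵥ z) := by
    rw [e1, ← e2]
    calc |z ⬝ᵥ ((D⁻¹ * A * D⁻¹) *ᵥ z)| ≤ ‖D⁻¹ * A * D⁻¹‖ * (z ⬝ᵥ z) := hN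
      _ ≤ κ⁻¹ ^ 2 * δ * (z ⬝ᵥ z) := mul_le_mul_of_nonneg_right h hzz
  have step2 : κ⁻¹ ^ 2 * δ * (z ⬝ᵥ z) ≤ δ * (x ⬝ᵥ x) := by
    rw [e3, ← e4]
    have hδκ : (0:ℝ) ≤ κ⁻¹ ^ 2 * δ := mul_nonneg (le_of_lt hκ2) hδ0
    have hκne : κ ≠ 0 := ne_of_gt hκ
    calc κ⁻¹ ^ 2 * δ * (y ⬝ᵥ ((D ^ 2) *ᵥ y)) ≤ κ⁻¹ ^ 2 * δ * (κ ^ 2 * (y ⬝ᵥ (F *ᵥ y))) :=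
          mul_le_mul_of_nonneg_left hLs hδκ
      _ = δ * (y ⬝ᵥ (F *ᵥ y)) := by
          field_simp
  linarith
end

section
/- Let F, F₁ be positive definite symmetric matrices and D a positive definite symmetric matrix with D² ≤ F (Loewner order) and ‖D⁻¹(F₁ - F)D⁻¹‖ ≤ δ < 1. Then for any vector u, (1 - δ)‖D⁻¹ F u‖ ≤ ‖D⁻¹ F₁ u‖ ≤ (1 + δ)‖D⁻¹ F u‖. -/
open scoped Matrix.Norms.L2Operator RealInnerProductSpace
open Matrix

theorem stmt_4 {p : ℕ} (F F₁ D : Matrix (Fin p) (Fin p) ℝ)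
    (hF : F.PosDef) (hF₁ : F₁.PosDef) (hD : D.PosDef)
    (hLoewner : (F - D ^ 2).PosSemidef)
    (δ : ℝ) (hδ : δ < 1) (h : ‖D⁻¹ * (F₁ - F) * D⁻¹‖ ≤ δ) (u : Fin p → ℝ) :
    (1 - δ) * vnorm (D⁻¹ *ᵥ F *ᵥ u) ≤ vnorm (D⁻¹ *ᵥ F₁ *ᵥ u) ∧
      vnorm (D⁻¹ *ᵥ F₁ *ᵥ u) ≤ (1 + δ) * vnorm (D⁻¹ *ᵥ F *ᵥ u) := by
  have hDdet : IsUnit D.det := isUnit_iff_ne_zero.mpr (ne_of_gt hD.det_pos)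
  have hDD : D * D⁻¹ = 1 := mul_nonsing_inv D hDdet
  have hDD' : D⁻¹ * D = 1 := nonsing_inv_mul D hDdet
  have hDT : Dᵀ = D := hD.1.eq
  have hDinvT : D⁻¹ᵀ = D⁻¹ := by rw [transpose_nonsing_inv, hDT]
  have hinner : ∀ x y : Fin p → ℝ,
      ⟪(WithLp.equiv 2 (Fin p → ℝ)).symm x, (WithLp.equiv 2 (Fin p → ℝ)).symm y⟫ = x ⬝ᵥ y := by
    intro x y
    rw [EuclideanSpace.inner_eq_star_dotProduct]
    simp [dotProduct, mul_comm]
  -- step 1: ‖Du‖ ≤ ‖D⁻¹Fu‖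
  have h2 : (D *ᵥ u) ⬝ᵥ (D *ᵥ u) = u ⬝ᵥ ((D ^ 2) *ᵥ u) := by
    rw [dotProduct_mulVec, ← mulVec_transpose, hDT, mulVec_mulVec, ← pow_two,
      dotProduct_comm]
  have h3 : u ⬝ᵥ (F *ᵥ u) = (D *ᵥ u) ⬝ᵥ (D⁻¹ *ᵥ F *ᵥ u) := by
    rw [dotProduct_mulVec (D *ᵥ u) D⁻¹, ← mulVec_transpose, hDinvT, mulVec_mulVec, hDD',
      one_mulVec]
  have hle : (D *ᵥ u) ⬝ᵥ (D *ᵥ u) ≤ u ⬝ᵥ (F *ᵥ u) := by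
    have h1 := hLoewner.dotProduct_mulVec_nonneg u
    simp only [sub_mulVec, dotProduct_sub, star_trivial] at h1
    rw [h2]; linarith
  have hkey : vnorm (D *ᵥ u) ≤ vnorm (D⁻¹ *ᵥ F *ᵥ u) := by
    rcases eq_or_lt_of_le (norm_nonneg ((WithLp.equiv 2 (Fin p → ℝ)).symm (D *ᵥ u))) with h0 | h0
    · unfold vnorm; rw [← h0]; exact norm_nonneg _
    · have hsq : vnorm (D *ᵥ u) * vnorm (D *ᵥ u) ≤ vnorm (D *ᵥ u) * vnorm (D⁻¹ *ᵥ F *ᵥ u) := by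
        calc vnorm (D *ᵥ u) * vnorm (D *ᵥ u)
            = ⟪(WithLp.equiv 2 (Fin p → ℝ)).symm (D *ᵥ u),
                (WithLp.equiv 2 (Fin p → ℝ)).symm (D *ᵥ u)⟫ := by
              rw [real_inner_self_eq_norm_mul_norm]; rfl
          _ = (D *ᵥ u) ⬝ᵥ (D *ᵥ u) := hinner _ _
          _ ≤ (D *ᵥ u) ⬝ᵥ (D⁻¹ *ᵥ F *ᵥ u) := by rw [← h3]; exact hle
          _ = ⟪(WithLp.equiv 2 (Fin p → ℝ)).symm (D *ᵥ u),
                (WithLp.equiv 2 (Fin p → ℝ)).symm (D⁻¹ *ᵥ F *ᵥ u)⟫ := (hinner _ _).symm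
          _ ≤ vnorm (D *ᵥ u) * vnorm (D⁻¹ *ᵥ F *ᵥ u) := real_inner_le_norm _ _
      exact le_of_mul_le_mul_left hsq h0
  -- step 2: the difference
  have hdiff : D⁻¹ *ᵥ F₁ *ᵥ u - D⁻¹ *ᵥ F *ᵥ u = (D⁻¹ * (F₁ - F) * D⁻¹) *ᵥ (D *ᵥ u) := by
    have hm : D⁻¹ * (F₁ - F) * D⁻¹ * D = D⁻¹ * F₁ - D⁻¹ * F := by
      rw [Matrix.mul_assoc (D⁻¹ * (F₁ - F)) D⁻¹ D, hDD', Matrix.mul_one, Matrix.mul_sub]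
    rw [mulVec_mulVec, mulVec_mulVec, mulVec_mulVec, hm, sub_mulVec]
  have hδ0 : (0:ℝ) ≤ δ := le_trans (norm_nonneg _) h
  have hbound : vnorm (D⁻¹ *ᵥ F₁ *ᵥ u - D⁻¹ *ᵥ F *ᵥ u) ≤ δ * vnorm (D⁻¹ *ᵥ F *ᵥ u) := by
    rw [hdiff]
    calc vnorm ((D⁻¹ * (F₁ - F) * D⁻¹) *ᵥ (D *ᵥ u))
        ≤ ‖D⁻¹ * (F₁ - F) * D⁻¹‖ * vnorm (D *ᵥ u) :=
          l2_opNorm_mulVec _ ((WithLp.equiv 2 (Fin p → ℝ)).symm (D *ᵥ u))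
      _ ≤ δ * vnorm (D⁻¹ *ᵥ F *ᵥ u) := by
          apply mul_le_mul h hkey (norm_nonneg _) hδ0
  have htri1 : vnorm (D⁻¹ *ᵥ F₁ *ᵥ u) ≤ vnorm (D⁻¹ *ᵥ F *ᵥ u)
      + vnorm (D⁻¹ *ᵥ F₁ *ᵥ u - D⁻¹ *ᵥ F *ᵥ u) := by
    unfold vnorm
    rw [WithLp.equiv_symm_apply, WithLp.toLp_sub]
    exact norm_le_norm_add_norm_sub' _ _
  have htri2 : vnorm (D⁻¹ *ᵥ F *ᵥ u) ≤ vnorm (D⁻¹ *ᵥ F₁ *ᵥ u)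
      + vnorm (D⁻¹ *ᵥ F₁ *ᵥ u - D⁻¹ *ᵥ F *ᵥ u) := by
    unfold vnorm
    rw [WithLp.equiv_symm_apply, WithLp.toLp_sub]
    exact norm_le_norm_add_norm_sub _ _
  constructor
  · nlinarith [hbound, htri2]
  · nlinarith [hbound, htri1]
end

section
/- Let F, F₁ be positive definite symmetric matrices and D a positive definite symmetric matrix with D² ≤ F and ‖D⁻¹(F₁ - F)D⁻¹‖ ≤ δ < 1/2. Then for any vector u, ((1 - 2δ)/(1 - δ))‖D F⁻¹ u‖ ≤ ‖D F₁⁻¹ u‖ ≤ (1/(1 - δ))‖D F⁻¹ u‖. -/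
open scoped Matrix.Norms.L2Operator RealInnerProductSpace
open Matrix

namespace StmtAux

variable {p : ℕ}

lemma dot_eq_inner (a b : Fin p → ℝ) :
    a ⬝ᵥ b = ⟪(WithLp.equiv 2 (Fin p → ℝ)).symm a, (WithLp.equiv 2 (Fin p → ℝ)).symm b⟫ := by
  simp [PiLp.inner_apply, dotProduct, RCLike.inner_apply, mul_comm]

lemma vnorm_nonneg (a : Fin p → ℝ) : 0 ≤ vnorm a := norm_nonneg _

lemma dot_self (a : Fin p → ℝ) : a ⬝ᵥ a = vnorm a ^ 2 := by
  rw [dot_eq_inner, real_inner_self_eq_norm_sq, vnorm]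

lemma abs_dot_le (a b : Fin p → ℝ) : |a ⬝ᵥ b| ≤ vnorm a * vnorm b := by
  rw [dot_eq_inner]; exact abs_real_inner_le_norm _ _

lemma vnorm_mulVec_le (A : Matrix (Fin p) (Fin p) ℝ) (v : Fin p → ℝ) :
    vnorm (A *ᵥ v) ≤ ‖A‖ * vnorm v := by
  simpa [vnorm] using Matrix.l2_opNorm_mulVec A ((WithLp.equiv 2 (Fin p → ℝ)).symm v)

lemma vnorm_le_add (a b : Fin p → ℝ) : vnorm a ≤ vnorm b + vnorm (b - a) := by
  simpa [vnorm, WithLp.equiv_symm_apply, WithLp.toLp_sub, sub_sub_cancel] using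
    norm_sub_le ((WithLp.equiv 2 (Fin p → ℝ)).symm b)
      ((WithLp.equiv 2 (Fin p → ℝ)).symm b - (WithLp.equiv 2 (Fin p → ℝ)).symm a)

lemma vnorm_sub_rev (a b : Fin p → ℝ) : vnorm (a - b) = vnorm (b - a) := by
  simp only [vnorm, WithLp.equiv_symm_apply, WithLp.toLp_sub]
  exact norm_sub_rev _ _

lemma inv_bound (M : Matrix (Fin p) (Fin p) ℝ) (hdet : IsUnit M.det) (c : ℝ) (hc : 0 < c)
    (hq : ∀ z, c * (z ⬝ᵥ z) ≤ z ⬝ᵥ (M *ᵥ z)) (w : Fin p → ℝ) :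
    vnorm (M⁻¹ *ᵥ w) ≤ (1 / c) * vnorm w := by
  set z := M⁻¹ *ᵥ w with hz
  have hMz : M *ᵥ z = w := by
    rw [hz, Matrix.mulVec_mulVec, Matrix.mul_nonsing_inv _ hdet, Matrix.one_mulVec]
  have h1 : c * vnorm z ^ 2 ≤ vnorm z * vnorm w := by
    calc c * vnorm z ^ 2 = c * (z ⬝ᵥ z) := by rw [dot_self]
      _ ≤ z ⬝ᵥ (M *ᵥ z) := hq z
      _ = z ⬝ᵥ w := by rw [hMz]
      _ ≤ |z ⬝ᵥ w| := le_abs_self _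
      _ ≤ vnorm z * vnorm w := abs_dot_le _ _
  rw [one_div_mul_eq_div, le_div_iff₀ hc]
  rcases eq_or_lt_of_le (vnorm_nonneg z) with h0 | h0
  · rw [← h0]; simpa using vnorm_nonneg w
  · nlinarith

end StmtAux

open StmtAux in
theorem stmt_5 {p : ℕ} (F F₁ D : Matrix (Fin p) (Fin p) ℝ)
    (hF : F.PosDef) (hF₁ : F₁.PosDef) (hD : D.PosDef)
    (hLoewner : (F - D ^ 2).PosSemidef)
    (δ : ℝ) (hδ : δ < 1 / 2) (h : ‖D⁻¹ * (F₁ - F) * D⁻¹‖ ≤ δ) (u : Fin p → ℝ) :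
    ((1 - 2 * δ) / (1 - δ)) * vnorm (D *ᵥ F⁻¹ *ᵥ u) ≤ vnorm (D *ᵥ F₁⁻¹ *ᵥ u) ∧
      vnorm (D *ᵥ F₁⁻¹ *ᵥ u) ≤ (1 / (1 - δ)) * vnorm (D *ᵥ F⁻¹ *ᵥ u) := by
  have hδ0 : 0 ≤ δ := le_trans (norm_nonneg _) h
  have h1δ : 0 < 1 - δ := by linarith
  have hDdet : IsUnit D.det := isUnit_iff_ne_zero.2 hD.det_pos.ne'
  have hF₁det : IsUnit F₁.det := isUnit_iff_ne_zero.2 hF₁.det_pos.ne'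
  have hD1 : D * D⁻¹ = 1 := Matrix.mul_nonsing_inv _ hDdet
  have hD2 : D⁻¹ * D = 1 := Matrix.nonsing_inv_mul _ hDdet
  have hF1 : F₁⁻¹ * F₁ = 1 := Matrix.nonsing_inv_mul _ hF₁det
  have hF2 : F * F⁻¹ = 1 := Matrix.mul_nonsing_inv _ (isUnit_iff_ne_zero.2 hF.det_pos.ne')
  have hcanc1 : ∀ X : Matrix (Fin p) (Fin p) ℝ, D * (D⁻¹ * X) = X := fun X => by
    rw [← Matrix.mul_assoc, hD1, Matrix.one_mul]
  have hcanc2 : ∀ X : Matrix (Fin p) (Fin p) ℝ, D⁻¹ * (D * X) = X := fun X => by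
    rw [← Matrix.mul_assoc, hD2, Matrix.one_mul]
  have hF1c : ∀ X : Matrix (Fin p) (Fin p) ℝ, F₁⁻¹ * (F₁ * X) = X := fun X => by
    rw [← Matrix.mul_assoc, hF1, Matrix.one_mul]
  set E : Matrix (Fin p) (Fin p) ℝ := D⁻¹ * (F₁ - F) * D⁻¹ with hE
  set M : Matrix (Fin p) (Fin p) ℝ := D⁻¹ * F₁ * D⁻¹ with hM
  set N : Matrix (Fin p) (Fin p) ℝ := D⁻¹ * F * D⁻¹ with hN
  have hDsymm : (D⁻¹)ᴴ = D⁻¹ := Matrix.IsHermitian.inv hD.1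
  have hMdet : IsUnit M.det := by
    rw [isUnit_iff_ne_zero, hM, Matrix.det_mul, Matrix.det_mul, Matrix.det_nonsing_inv, Ring.inverse_eq_inv]
    exact (mul_pos (mul_pos (inv_pos.2 hD.det_pos) hF₁.det_pos)
      (inv_pos.2 hD.det_pos)).ne'
  have hMinv : M⁻¹ = D * F₁⁻¹ * D := by
    rw [hM, Matrix.mul_inv_rev, Matrix.mul_inv_rev, Matrix.nonsing_inv_nonsing_inv _ hDdet,
      Matrix.mul_assoc]
  -- quadratic lower bound from the Loewner order
  have hNq : ∀ z : Fin p → ℝ, z ⬝ᵥ z ≤ z ⬝ᵥ (N *ᵥ z) := by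
    intro z
    have hP : (D⁻¹ * (F - D ^ 2) * D⁻¹).PosSemidef := by
      have := hLoewner.conjTranspose_mul_mul_same (B := D⁻¹)
      rwa [hDsymm] at this
    have hPe : D⁻¹ * (F - D ^ 2) * D⁻¹ = N - 1 := by
      rw [Matrix.mul_sub, Matrix.sub_mul, hN, pow_two, ← Matrix.mul_assoc,
        Matrix.mul_assoc (D⁻¹ * D), hD2, Matrix.one_mul, hD1]
    have h0 := hP.dotProduct_mulVec_nonneg z
    rw [hPe] at h0
    simp only [Matrix.sub_mulVec, Matrix.one_mulVec, dotProduct_sub, star_trivial] at h0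
    linarith
  have hEq : ∀ z : Fin p → ℝ, |z ⬝ᵥ (E *ᵥ z)| ≤ δ * (z ⬝ᵥ z) := by
    intro z
    calc |z ⬝ᵥ (E *ᵥ z)| ≤ vnorm z * vnorm (E *ᵥ z) := abs_dot_le _ _
      _ ≤ vnorm z * (‖E‖ * vnorm z) :=
          mul_le_mul_of_nonneg_left (vnorm_mulVec_le _ _) (vnorm_nonneg _)
      _ ≤ δ * (z ⬝ᵥ z) := by
          rw [dot_self]
          nlinarith [vnorm_nonneg z, norm_nonneg E]
  have hMq : ∀ z : Fin p → ℝ, (1 - δ) * (z ⬝ᵥ z) ≤ z ⬝ᵥ (M *ᵥ z) := by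
    intro z
    have hMN : M = N + E := by
      rw [hM, hN, hE, Matrix.mul_sub, Matrix.sub_mul]
      abel
    rw [hMN, Matrix.add_mulVec, dotProduct_add]
    have h1 := hNq z
    have h2 := (abs_le.mp (hEq z)).1
    nlinarith
  -- key identity
  set x := D *ᵥ F⁻¹ *ᵥ u with hx
  set y := D *ᵥ F₁⁻¹ *ᵥ u with hy
  have hmat : M⁻¹ * E * (D * F⁻¹) = D * F⁻¹ - D * F₁⁻¹ := by
    rw [hMinv, hE]
    simp only [Matrix.mul_sub, Matrix.sub_mul, Matrix.mul_assoc, hcanc1, hcanc2, hF2,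
      Matrix.mul_one, hF1c]
  have hkey : x - y = M⁻¹ *ᵥ (E *ᵥ x) := by
    rw [hx, hy]
    rw [Matrix.mulVec_mulVec, Matrix.mulVec_mulVec, Matrix.mulVec_mulVec,
      Matrix.mulVec_mulVec, ← Matrix.sub_mulVec, ← hmat]
  have hEx : vnorm (E *ᵥ x) ≤ δ * vnorm x :=
    le_trans (vnorm_mulVec_le _ _) (mul_le_mul_of_nonneg_right h (vnorm_nonneg _))
  have hdiff : vnorm (x - y) ≤ (1 / (1 - δ)) * (δ * vnorm x) := by
    rw [hkey]
    refine le_trans (inv_bound M hMdet (1 - δ) h1δ hMq _) ?_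
    exact mul_le_mul_of_nonneg_left hEx (by positivity)
  have hxnn := vnorm_nonneg x
  have hd' : vnorm (x - y) * (1 - δ) ≤ δ * vnorm x := by
    have h5 := mul_le_mul_of_nonneg_right hdiff h1δ.le
    rw [one_div, mul_comm ((1 - δ)⁻¹) (δ * vnorm x), mul_assoc,
      inv_mul_cancel₀ h1δ.ne', mul_one] at h5
    linarith
  have hy_le : vnorm y ≤ vnorm x + vnorm (x - y) := vnorm_le_add y x
  have hx_le : vnorm x ≤ vnorm y + vnorm (x - y) := by
    have h6 := vnorm_le_add x y
    rwa [vnorm_sub_rev y x] at h6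
  constructor
  · rw [div_mul_eq_mul_div, div_le_iff₀ h1δ]
    nlinarith [vnorm_nonneg (x - y)]
  · rw [one_div, inv_mul_eq_div, le_div_iff₀ h1δ]
    nlinarith [vnorm_nonneg (x - y)]
end

section
/- Let F, F₁ be positive definite symmetric matrices, D invertible symmetric with ‖D⁻¹(F₁ - F)D⁻¹‖ ≤ δ < 1 and ‖D F⁻¹ D‖ ≤ 1, and let Q be any matrix and 𝒜 any vector. Then ‖Q(F₁⁻¹ - F⁻¹)𝒜‖ ≤ ‖Q F⁻¹ D‖ · δ · (1/(1-δ)) · ‖D F⁻¹ 𝒜‖. -/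
open scoped Matrix.Norms.L2Operator RealInnerProductSpace
open Matrix

lemma vnorm_mulVec_le {m n : ℕ} (A : Matrix (Fin m) (Fin n) ℝ) (x : Fin n → ℝ) :
    vnorm (A *ᵥ x) ≤ ‖A‖ * vnorm x :=
  A.l2_opNorm_mulVec ((WithLp.equiv 2 (Fin n → ℝ)).symm x)

lemma vnorm_add_le {n : ℕ} (x y : Fin n → ℝ) :
    vnorm (x + y) ≤ vnorm x + vnorm y := by
  unfold vnorm
  rw [show (WithLp.equiv 2 (Fin n → ℝ)).symm (x + y) =
      (WithLp.equiv 2 (Fin n → ℝ)).symm x + (WithLp.equiv 2 (Fin n → ℝ)).symm y from rfl]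
  exact norm_add_le _ _

theorem stmt_10 {p q : ℕ} (F F₁ D : Matrix (Fin p) (Fin p) ℝ)
    (hF : F.PosDef) (hF₁ : F₁.PosDef) (hDs : D.IsSymm) (hDu : IsUnit D.det)
    (δ : ℝ) (hδ : δ < 1) (h : ‖D⁻¹ * (F₁ - F) * D⁻¹‖ ≤ δ) (hDF : ‖D * F⁻¹ * D‖ ≤ 1)
    (Q : Matrix (Fin q) (Fin p) ℝ) (𝒜 : Fin p → ℝ) :
    vnorm ((Q * (F₁⁻¹ - F⁻¹)) *ᵥ 𝒜) ≤
      ‖Q * F⁻¹ * D‖ * δ * (1 / (1 - δ)) * vnorm (D *ᵥ F⁻¹ *ᵥ 𝒜) := by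
  have hFu : IsUnit F.det := hF.det_pos.ne'.isUnit
  have hF₁u : IsUnit F₁.det := hF₁.det_pos.ne'.isUnit
  set M : Matrix (Fin p) (Fin p) ℝ := D⁻¹ * (F - F₁) * D⁻¹ with hM
  have hMnorm : ‖M‖ ≤ δ := by
    have : M = -(D⁻¹ * (F₁ - F) * D⁻¹) := by
      rw [hM]
      simp [Matrix.mul_sub, Matrix.sub_mul, neg_sub]
    rw [this, norm_neg]
    exact h
  have hδ0 : 0 ≤ δ := le_trans (norm_nonneg _) h
  have hδ1 : 0 < 1 - δ := by linarith
  -- the key inner identity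
  have hFi : F⁻¹ * ((F - F₁) * F₁⁻¹) = F₁⁻¹ - F⁻¹ := by
    rw [Matrix.sub_mul, Matrix.mul_sub, ← Matrix.mul_assoc, nonsing_inv_mul F hFu,
      Matrix.one_mul, mul_nonsing_inv F₁ hF₁u, Matrix.mul_one]
  have factor : ∀ {r : ℕ} (X : Matrix (Fin r) (Fin p) ℝ),
      X * F⁻¹ * D * (M * (D * F₁⁻¹)) = X * (F₁⁻¹ - F⁻¹) := by
    intro r X
    have e : X * F⁻¹ * D * (M * (D * F₁⁻¹)) =
        X * F⁻¹ * (D * D⁻¹) * ((F - F₁) * ((D⁻¹ * D) * F₁⁻¹)) := by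
      simp only [hM, Matrix.mul_assoc]
    rw [e, mul_nonsing_inv D hDu, nonsing_inv_mul D hDu, Matrix.mul_one,
      Matrix.one_mul, Matrix.mul_assoc, hFi]
  -- bound on a := ‖D F₁⁻¹ 𝒜‖ in terms of b := ‖D F⁻¹ 𝒜‖
  set a : ℝ := vnorm ((D * F₁⁻¹) *ᵥ 𝒜) with ha
  set b : ℝ := vnorm (D *ᵥ F⁻¹ *ᵥ 𝒜) with hb
  have hb' : b = vnorm ((D * F⁻¹) *ᵥ 𝒜) := by rw [hb, mulVec_mulVec]
  have hbound : a ≤ b + δ * a := by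
    have hsplit : (D * F₁⁻¹) *ᵥ 𝒜 =
        (D * F⁻¹) *ᵥ 𝒜 + (D * F⁻¹ * D * (M * (D * F₁⁻¹))) *ᵥ 𝒜 := by
      rw [factor D, ← Matrix.add_mulVec, Matrix.mul_sub]
      congr 1
      rw [add_sub_cancel]
    have h1 : vnorm ((D * F⁻¹ * D * (M * (D * F₁⁻¹))) *ᵥ 𝒜) ≤ δ * a := by
      calc vnorm ((D * F⁻¹ * D * (M * (D * F₁⁻¹))) *ᵥ 𝒜)
          = vnorm ((D * F⁻¹ * D) *ᵥ ((M * (D * F₁⁻¹)) *ᵥ 𝒜)) := by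
            rw [mulVec_mulVec]
        _ ≤ ‖D * F⁻¹ * D‖ * vnorm ((M * (D * F₁⁻¹)) *ᵥ 𝒜) := vnorm_mulVec_le _ _
        _ ≤ 1 * vnorm ((M * (D * F₁⁻¹)) *ᵥ 𝒜) := by
            apply mul_le_mul_of_nonneg_right hDF
            unfold vnorm; exact norm_nonneg _
        _ = vnorm (M *ᵥ ((D * F₁⁻¹) *ᵥ 𝒜)) := by rw [one_mul, mulVec_mulVec]
        _ ≤ ‖M‖ * a := vnorm_mulVec_le _ _
        _ ≤ δ * a := by
            apply mul_le_mul_of_nonneg_right hMnorm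
            rw [ha]; unfold vnorm; exact norm_nonneg _
    calc a = vnorm ((D * F⁻¹) *ᵥ 𝒜 + (D * F⁻¹ * D * (M * (D * F₁⁻¹))) *ᵥ 𝒜) := by
            rw [ha, hsplit]
      _ ≤ vnorm ((D * F⁻¹) *ᵥ 𝒜) + vnorm ((D * F⁻¹ * D * (M * (D * F₁⁻¹))) *ᵥ 𝒜) :=
            vnorm_add_le _ _
      _ ≤ b + δ * a := by rw [hb']; exact add_le_add_right h1 _
  have ha_le : a ≤ (1 / (1 - δ)) * b := by
    rw [div_mul_eq_mul_div, one_mul, le_div_iff₀ hδ1]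
    nlinarith
  -- main bound
  have ha0 : 0 ≤ a := by rw [ha]; unfold vnorm; exact norm_nonneg _
  calc vnorm ((Q * (F₁⁻¹ - F⁻¹)) *ᵥ 𝒜)
      = vnorm ((Q * F⁻¹ * D * (M * (D * F₁⁻¹))) *ᵥ 𝒜) := by rw [factor Q]
    _ = vnorm ((Q * F⁻¹ * D) *ᵥ ((M * (D * F₁⁻¹)) *ᵥ 𝒜)) := by rw [mulVec_mulVec]
    _ ≤ ‖Q * F⁻¹ * D‖ * vnorm ((M * (D * F₁⁻¹)) *ᵥ 𝒜) := vnorm_mulVec_le _ _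
    _ = ‖Q * F⁻¹ * D‖ * vnorm (M *ᵥ ((D * F₁⁻¹) *ᵥ 𝒜)) := by rw [mulVec_mulVec]
    _ ≤ ‖Q * F⁻¹ * D‖ * (‖M‖ * a) :=
        mul_le_mul_of_nonneg_left (vnorm_mulVec_le _ _) (norm_nonneg _)
    _ ≤ ‖Q * F⁻¹ * D‖ * δ * (1 / (1 - δ)) * b := by
        have hQ0 : 0 ≤ ‖Q * F⁻¹ * D‖ := norm_nonneg _
        have h1 : ‖M‖ * a ≤ δ * a := mul_le_mul_of_nonneg_right hMnorm ha0
        have h2 : δ * a ≤ δ * ((1 / (1 - δ)) * b) :=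
          mul_le_mul_of_nonneg_left ha_le hδ0
        nlinarith [mul_le_mul_of_nonneg_left (h1.trans h2) hQ0]
end

section
/- Let F, F₁ be symmetric positive definite matrices and D symmetric invertible with ‖D⁻¹(F₁ - F)D⁻¹‖ ≤ δ and ‖D F⁻¹ D‖ ≤ 1, ‖D F₁⁻¹ D‖ ≤ 1/(1-δ) for δ < 1. Then ‖D(F₁⁻¹ - F⁻¹)u‖ ≤ (δ/(1-δ))‖D F⁻¹ u‖ for every vector u. -/
open scoped Matrix.Norms.L2Operator RealInnerProductSpace
open Matrix

theorem stmt_15 {p : ℕ} (F F₁ D : Matrix (Fin p) (Fin p) ℝ)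
    (hF : F.PosDef) (hF₁ : F₁.PosDef) (hDs : D.IsSymm) (hDu : IsUnit D.det)
    (δ : ℝ) (hδ : δ < 1) (h : ‖D⁻¹ * (F₁ - F) * D⁻¹‖ ≤ δ)
    (hDF : ‖D * F⁻¹ * D‖ ≤ 1) (hDF₁ : ‖D * F₁⁻¹ * D‖ ≤ 1 / (1 - δ))
    (u : Fin p → ℝ) :
    vnorm ((D * (F₁⁻¹ - F⁻¹)) *ᵥ u) ≤ (δ / (1 - δ)) * vnorm (D *ᵥ F⁻¹ *ᵥ u) := by
  have hδ0 : 0 ≤ δ := le_trans (norm_nonneg _) h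
  set A := D * F₁⁻¹ * D with hA
  set B := D⁻¹ * (F₁ - F) * D⁻¹ with hB
  set C := D * F⁻¹ with hC
  have hDD : D * D⁻¹ = 1 := mul_nonsing_inv D hDu
  have hD'D : D⁻¹ * D = 1 := nonsing_inv_mul D hDu
  have hFinv : F⁻¹ * F = 1 := nonsing_inv_mul F (isUnit_iff_ne_zero.mpr hF.det_pos.ne')
  have hF₁inv : F₁⁻¹ * F₁ = 1 := nonsing_inv_mul F₁ (isUnit_iff_ne_zero.mpr hF₁.det_pos.ne')
  have cancel1 : ∀ X : Matrix (Fin p) (Fin p) ℝ, D * (D⁻¹ * X) = X := fun X => by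
    rw [← Matrix.mul_assoc, hDD, Matrix.one_mul]
  have cancel2 : ∀ X : Matrix (Fin p) (Fin p) ℝ, D⁻¹ * (D * X) = X := fun X => by
    rw [← Matrix.mul_assoc, hD'D, Matrix.one_mul]
  have hFF : F * F⁻¹ = 1 := mul_nonsing_inv F (isUnit_iff_ne_zero.mpr hF.det_pos.ne')
  have key2 : A * B * C = D * F⁻¹ - D * F₁⁻¹ := by
    rw [hA, hB, hC]
    simp only [Matrix.mul_assoc]
    rw [cancel2, cancel1, sub_mul, mul_sub, mul_sub, ← Matrix.mul_assoc F₁⁻¹ F₁ F⁻¹,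
      hF₁inv, Matrix.one_mul, hFF, Matrix.mul_one]
  have key : D * (F₁⁻¹ - F⁻¹) = -(A * B * C) := by
    rw [key2, neg_sub, Matrix.mul_sub]
  have step : ∀ (M : Matrix (Fin p) (Fin p) ℝ) (v : Fin p → ℝ),
      vnorm (M *ᵥ v) ≤ ‖M‖ * vnorm v := fun M v => by
        have := M.l2_opNorm_mulVec ((WithLp.equiv 2 (Fin p → ℝ)).symm v); exact this
  calc vnorm ((D * (F₁⁻¹ - F⁻¹)) *ᵥ u)
      = vnorm ((A * B * C) *ᵥ u) := by
        rw [key, neg_mulVec]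
        unfold vnorm
        rw [WithLp.equiv_symm_apply, WithLp.toLp_neg, norm_neg]
    _ = vnorm (A *ᵥ (B *ᵥ (C *ᵥ u))) := by rw [mulVec_mulVec, mulVec_mulVec]
    _ ≤ ‖A‖ * vnorm (B *ᵥ (C *ᵥ u)) := step _ _
    _ ≤ ‖A‖ * (‖B‖ * vnorm (C *ᵥ u)) := by
        exact mul_le_mul_of_nonneg_left (step _ _) (norm_nonneg _)
    _ ≤ (1 / (1 - δ)) * (δ * vnorm (C *ᵥ u)) := by
        have hv : 0 ≤ vnorm (C *ᵥ u) := norm_nonneg _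
        have h1δ : (0:ℝ) < 1 - δ := by linarith
        gcongr
    _ = (δ / (1 - δ)) * vnorm (D *ᵥ F⁻¹ *ᵥ u) := by
        rw [hC, ← mulVec_mulVec]; ring
end
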